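/- Let G be a graph of girth at least five and maximum average degree d ≥ 2 (i.e., some subgraph has average degree d and no subgraph has larger average degree). Then every weak 2-guidance system in G has maximum outdegree at least d/2. -/

import Mathlib

open SimpleGraph

variable {V : Type*}

/-- `H` is a partial orientation of `G`: every directed edge of `H` projects to an edge of `G`. -/
def IsPartialOrientation (G : SimpleGraph V) (H : V → V → Prop) : Prop :=
  ∀ ⦃u v⦄, H u v → G.Adj u v

/-- `oball H v a` is the set of vertices reachable from `v` in `H` by a directed path
of length at most `a`. -/
def oball (H : V → V → Prop) (v : V) : ℕ → Set V
  | 0 => {v}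
  | a + 1 => oball H v a ∪ {w | ∃ x ∈ oball H v a, H x w}

/-- `gate G u v` is the set of neighbors of `u` at distance `dist u v - 1` from `v`,
i.e. the possible second vertices of shortest `u`-`v` paths. -/
def gate (G : SimpleGraph V) (u v : V) : Set V :=
  {y | G.Adj u y ∧ G.dist y v = G.dist u v - 1}

/-- `H` is a weak `r`-guidance system of `G`: for distinct `u,v` at distance `ℓ ≤ r`
there are `a + b = ℓ - 1` and an edge of `G` between `oball H u a` and `oball H v b`. -/
def IsWeakGuidance (G : SimpleGraph V) (H : V → V → Prop) (r : ℕ) : Prop :=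
  ∀ u v : V, u ≠ v → G.Reachable u v → G.dist u v ≤ r →
    ∃ a b : ℕ, a + b = G.dist u v - 1 ∧ ∃ x ∈ oball H u a, ∃ y ∈ oball H v b, G.Adj x y

/-- Gate formulation of weak `r`-guidance systems: for `u,v` at distance `ℓ` with
`2 ≤ ℓ ≤ r`, `u` has an outneighbor in `gate G u v` or `v` has one in `gate G v u`. -/
def IsWeakGuidanceGate (G : SimpleGraph V) (H : V → V → Prop) (r : ℕ) : Prop :=
  ∀ u v : V, 2 ≤ G.dist u v → G.dist u v ≤ r →
    (∃ y ∈ gate G u v, H u y) ∨ (∃ y ∈ gate G v u, H v y)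

/-- The outdegree of `u` in the partial orientation `H`. -/
noncomputable def outdeg (H : V → V → Prop) (u : V) : ℕ := {v | H u v}.ncard

/-- The edges of `G` with both endpoints in `A`. -/
def edgesWithin (G : SimpleGraph V) (A : Set V) : Set (Sym2 V) :=
  {e | e ∈ G.edgeSet ∧ ∀ v ∈ e, v ∈ A}

section aux
variable {G : SimpleGraph V}

lemma my_girth_le_length {a : V} {p : G.Walk a a} (hp : p.IsCycle) : G.girth ≤ p.length := by
  have h : G.egirth ≤ (p.length : ℕ∞) :=
    iInf_le_of_le a (iInf_le_of_le p (iInf_le _ hp))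
  have := ENat.toNat_le_toNat h (by simp : (p.length : ℕ∞) ≠ ⊤)
  simpa [SimpleGraph.girth] using this

lemma my_no_triangle (hg : 5 ≤ G.girth) {u v w : V} (h1 : G.Adj u v) (h2 : G.Adj v w)
    (h3 : G.Adj w u) : False := by
  have hp : (Walk.cons h1 (Walk.cons h2 (Walk.cons h3 Walk.nil))).IsCycle := by
    simp [Walk.isCycle_def, Walk.isTrail_def, List.Nodup, h1.ne, h2.ne, h3.ne, h1.ne',
      h2.ne', h3.ne', Sym2.eq_iff]
  have := my_girth_le_length hp
  simp at this
  omega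

lemma my_unique_nbr (hg : 5 ≤ G.girth) {u v w w' : V} (huv : u ≠ v)
    (h1 : G.Adj u w) (h2 : G.Adj w v) (h1' : G.Adj u w') (h2' : G.Adj w' v) : w = w' := by
  by_contra hne
  have hp : (Walk.cons h1 (Walk.cons h2 (Walk.cons h2'.symm
      (Walk.cons h1'.symm Walk.nil)))).IsCycle := by
    simp [Walk.isCycle_def, Walk.isTrail_def, List.Nodup, h1.ne, h2.ne, h1'.ne, h2'.ne, h1.ne',
      h2.ne', h1'.ne', h2'.ne', huv, hne, Sym2.eq_iff]
    exact Ne.symm huv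
  have := my_girth_le_length hp
  simp at this
  omega

/-- Key dichotomy: for distinct `u, v` both adjacent to `w`, `H u w` or `H v w`. -/
lemma my_key {H : V → V → Prop} (hg : 5 ≤ G.girth) (hw : IsWeakGuidanceGate G H 2)
    {u v w : V} (huv : u ≠ v) (hu : G.Adj w u) (hv : G.Adj w v) : H u w ∨ H v w := by
  have hnadj : ¬ G.Adj u v := fun h => my_no_triangle hg h hv.symm hu
  have hr : G.Reachable u v := ⟨Walk.cons hu.symm (Walk.cons hv Walk.nil)⟩
  have hle : G.dist u v ≤ 2 := by
    simpa using SimpleGraph.dist_le (Walk.cons hu.symm (Walk.cons hv Walk.nil))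
  have hne0 : G.dist u v ≠ 0 := by
    rw [SimpleGraph.dist_ne_zero_iff_ne_and_reachable]; exact ⟨huv, hr⟩
  have hne1 : G.dist u v ≠ 1 := fun h => hnadj (SimpleGraph.dist_eq_one_iff_adj.mp h)
  have hd2 : G.dist u v = 2 := by omega
  rcases hw u v (by omega) (by omega) with ⟨y, ⟨hy1, hy2⟩, hy3⟩ | ⟨y, ⟨hy1, hy2⟩, hy3⟩
  · left
    rw [hd2] at hy2
    have hadj : G.Adj y v := SimpleGraph.dist_eq_one_iff_adj.mp hy2
    have : y = w := my_unique_nbr hg huv hy1 hadj hu.symm hv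
    exact this ▸ hy3
  · right
    have hvu : G.dist v u = 2 := by rw [SimpleGraph.dist_comm]; exact hd2
    rw [hvu] at hy2
    norm_num at hy2
    have hadj : G.Adj y u := hy2
    have : y = w := my_unique_nbr hg (Ne.symm huv) hy1 hadj hv.symm hu
    exact this ▸ hy3

end aux


/-- If `G` has girth at least five and maximum average degree `d ≥ 2` (some vertex subset
induces average degree exactly `d`, and none induces more), then every weak `2`-guidance
system of `G` has maximum outdegree at least `d/2`. -/
theorem girth_five_mad_lower_bound {V : Type*} [Fintype V] (G : SimpleGraph V) (d : ℝ)
    (hgirth : 5 ≤ G.girth) (hd : 2 ≤ d)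
    (hmad : ∃ A : Set V, A.Nonempty ∧
      2 * ((edgesWithin G A).ncard : ℝ) = d * (A.ncard : ℝ))
    (hmax : ∀ A : Set V, 2 * ((edgesWithin G A).ncard : ℝ) ≤ d * (A.ncard : ℝ))
    (H : V → V → Prop) (hpo : IsPartialOrientation G H)
    (hw : IsWeakGuidanceGate G H 2) :
    ∃ u, d / 2 ≤ (outdeg H u : ℝ) := by
  classical
  by_contra hcon
  push_neg at hcon
  obtain ⟨A, hAne, hAeq⟩ := hmad
  haveI : Fintype A := A.toFinite.fintype
  haveI : Nonempty A := hAne.to_subtype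
  set deg : A → ℕ := fun w => (Finset.univ.filter (fun u : ↥A => G.Adj w.1 u.1)).card with hdegdef
  set g : A → ℕ := fun w => (Finset.univ.filter (fun u : ↥A => H u.1 w.1)).card with hgdef
  set out : V → ℕ := fun u => (Finset.univ.filter (fun v => H u v)).card with houtdef
  have hout : ∀ u, outdeg H u = out u := by
    intro u
    have h : {v | H u v} = ↑(Finset.univ.filter (fun v => H u v)) := by ext; simp
    rw [outdeg, h, Set.ncard_coe_finset]
  -- deg w ≤ g w + 1
  have hdeg : ∀ w : A, deg w ≤ g w + 1 := by
    intro w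
    have hsub : (Finset.univ.filter (fun u : ↥A => G.Adj w.1 u.1)) ⊆
        (Finset.univ.filter (fun u : ↥A => H u.1 w.1)) ∪
        (Finset.univ.filter (fun u : ↥A => G.Adj w.1 u.1 ∧ ¬ H u.1 w.1)) := by
      intro u hu; simp at hu ⊢; tauto
    have hone : (Finset.univ.filter (fun u : ↥A => G.Adj w.1 u.1 ∧ ¬ H u.1 w.1)).card ≤ 1 := by
      apply Finset.card_le_one.mpr
      intro a ha b hb
      simp only [Finset.mem_filter] at ha hb
      by_contra hab
      have hvals : a.1 ≠ b.1 := fun h => hab (Subtype.ext h)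
      rcases my_key hgirth hw hvals ha.2.1 hb.2.1 with h | h
      exacts [ha.2.2 h, hb.2.2 h]
    calc deg w ≤ _ := Finset.card_le_card hsub
      _ ≤ g w + (Finset.univ.filter (fun u : ↥A => G.Adj w.1 u.1 ∧ ¬ H u.1 w.1)).card :=
        Finset.card_union_le _ _
      _ ≤ g w + 1 := by omega
  -- Σ g ≤ Σ out
  have hg_le : ∑ w : A, g w ≤ ∑ u : A, out u.1 := by
    calc ∑ w : A, g w = ∑ w : A, ∑ u : A, (if H u.1 w.1 then 1 else 0) :=
          Finset.sum_congr rfl (fun w _ => Finset.card_filter _ _)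
      _ = ∑ u : A, ∑ w : A, (if H u.1 w.1 then 1 else 0) := Finset.sum_comm
      _ ≤ ∑ u : A, out u.1 := by
          refine Finset.sum_le_sum (fun u _ => ?_)
          rw [← Finset.card_filter]
          exact Finset.card_le_card_of_injOn Subtype.val (by intro x hx; simpa using hx)
            (Subtype.val_injective.injOn)
  -- handshake
  have hhand : ∑ w : A, deg w = 2 * (edgesWithin G A).ncard := by
    set G' : SimpleGraph ↥A := G.induce A with hG'
    haveI : DecidableRel G'.Adj := fun a b => Classical.dec _
    have hdeg' : ∀ w : A, G'.degree w = deg w := by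
      intro w
      rw [SimpleGraph.degree, SimpleGraph.neighborFinset_eq_filter, hdegdef]
      congr 1
      apply Finset.filter_congr
      intro u _
      exact Iff.rfl
    have himg : edgesWithin G A = (Sym2.map (Subtype.val : A → V)) '' G'.edgeSet := by
      ext e
      induction e using Sym2.ind with
      | _ a b =>
        constructor
        · rintro ⟨he, hmem⟩
          have ha : a ∈ A := hmem a (by simp)
          have hb : b ∈ A := hmem b (by simp)
          refine ⟨s(⟨a, ha⟩, ⟨b, hb⟩), ?_, by simp⟩
          simpa [G', SimpleGraph.mem_edgeSet] using he
        · rintro ⟨e', he', hee⟩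
          induction e' using Sym2.ind with
          | _ x y =>
            have hadj : G.Adj x.1 y.1 := by simpa [G'] using he'
            simp only [Sym2.map_pair_eq] at hee
            rw [← hee]
            exact ⟨hadj, by rintro v hv; rcases Sym2.mem_iff.mp hv with rfl | rfl
                            exacts [x.2, y.2]⟩
    have hinj : Function.Injective (Sym2.map (Subtype.val : A → V)) :=
      Sym2.map.injective Subtype.val_injective
    rw [himg, Set.ncard_image_of_injective _ hinj]
    have : G'.edgeSet.ncard = G'.edgeFinset.card := by
      rw [Set.ncard_eq_toFinset_card', SimpleGraph.edgeFinset]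
    rw [this, ← SimpleGraph.sum_degrees_eq_twice_card_edges]
    exact Finset.sum_congr rfl (fun w _ => (hdeg' w).symm)
  -- cardinality
  have hcard : Fintype.card A = A.ncard := by
    rw [← Nat.card_coe_set_eq, Nat.card_eq_fintype_card]
  have hApos : 0 < A.ncard := (Set.ncard_pos A.toFinite).mpr hAne
  -- chain in ℕ
  have hchain : 2 * (edgesWithin G A).ncard ≤ (∑ u : A, out u.1) + A.ncard := by
    calc 2 * (edgesWithin G A).ncard = ∑ w : A, deg w := hhand.symm
      _ ≤ ∑ w : A, (g w + 1) := Finset.sum_le_sum (fun w _ => hdeg w)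
      _ = (∑ w : A, g w) + Fintype.card A := by
          rw [Finset.sum_add_distrib]; simp [Finset.card_univ]
      _ ≤ (∑ u : A, out u.1) + A.ncard := by rw [← hcard]; exact Nat.add_le_add_right hg_le _
  -- real strict bound
  have hsum_lt : ((∑ u : A, out u.1 : ℕ) : ℝ) < (d / 2) * A.ncard := by
    push_cast
    calc (∑ u : A, (out u.1 : ℝ)) < ∑ _u : A, d / 2 := by
          refine Finset.sum_lt_sum_of_nonempty Finset.univ_nonempty (fun u _ => ?_)
          rw [← hout]; exact hcon u.1
      _ = (Fintype.card A) * (d / 2) := by simp [Finset.sum_const, Finset.card_univ, mul_comm]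
      _ = (d / 2) * A.ncard := by rw [hcard]; ring
  have hchainR : (2 * (edgesWithin G A).ncard : ℝ) ≤ (∑ u : A, out u.1 : ℕ) + A.ncard := by
    exact_mod_cast hchain
  have h1 : (1 : ℝ) ≤ A.ncard := by exact_mod_cast hApos
  nlinarith [hAeq, hchainR, hsum_lt, h1, hd]
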